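/- Let σ ∈ S_k satisfy σ(i) ≤ i+1 for all i. If 1 ≤ i-j-1, σ(i) ≤ i, σ(i-j-1) ≤ i-j-1, and σ(m) = m+1 for all m with i-j ≤ m ≤ i-1, then σ(i) = i-j. -/
import Mathlib


/-- String-structure property (0-indexed version of Property 3): let `σ ∈ S_k` satisfy
`σ(i) ≤ i + 1` for all `i`.  If indices `a - j - 1` and `a` are standard
(`σ(m) ≤ m`) and every index strictly between them is non-standard (`σ(m) = m + 1`),
then `σ(a) = a - j`. -/
theorem stmt4 (k : ℕ) (σ : Equiv.Perm (Fin k))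
    (hσ : ∀ i : Fin k, (σ i : ℕ) ≤ (i : ℕ) + 1)
    (a : Fin k) (j : ℕ) (hj : j + 1 ≤ (a : ℕ))
    (ha : (σ a : ℕ) ≤ (a : ℕ))
    (hprev : ∀ m : Fin k, (m : ℕ) = (a : ℕ) - j - 1 → (σ m : ℕ) ≤ (m : ℕ))
    (hmid : ∀ m : Fin k, (a : ℕ) - j ≤ (m : ℕ) → (m : ℕ) ≤ (a : ℕ) - 1 →
      (σ m : ℕ) = (m : ℕ) + 1) :
    (σ a : ℕ) = (a : ℕ) - j := by
  set A := (a : ℕ) with hA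
  -- Step 1: σ a ≥ A - j
  have h1 : A - j ≤ (σ a : ℕ) := by
    by_contra h
    push_neg at h
    have hσa : (σ a : ℕ) ≤ A - j - 1 := by omega
    set S : Finset (Fin k) := Finset.univ.filter (fun m => (m : ℕ) ≤ A - j - 1) with hS
    have hsub : S.image σ ⊆ S := by
      intro x hx
      simp only [hS, Finset.mem_image, Finset.mem_filter, Finset.mem_univ, true_and] at hx ⊢
      obtain ⟨m, hm, rfl⟩ := hx
      rcases eq_or_lt_of_le hm with h' | h'
      · have := hprev m h'; omega
      · have := hσ m; omega
    have hcard : S.card ≤ (S.image σ).card := by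
      rw [Finset.card_image_of_injective _ σ.injective]
    have heq : S.image σ = S := Finset.eq_of_subset_of_card_le hsub hcard
    have hmem : σ a ∈ S := by
      simp only [hS, Finset.mem_filter, Finset.mem_univ, true_and]; omega
    rw [← heq] at hmem
    simp only [hS, Finset.mem_image, Finset.mem_filter, Finset.mem_univ, true_and] at hmem
    obtain ⟨m, hm, hm2⟩ := hmem
    have hma := σ.injective hm2
    have : (m : ℕ) = A := congrArg Fin.val hma
    omega
  -- Step 2: σ a ≤ A - j
  by_contra hne
  have h2 : A - j + 1 ≤ (σ a : ℕ) := by omega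
  have hmk : (σ a : ℕ) - 1 < k := lt_of_le_of_lt (by omega) a.isLt
  set m : Fin k := ⟨(σ a : ℕ) - 1, hmk⟩ with hm
  have hmv : (m : ℕ) = (σ a : ℕ) - 1 := rfl
  have hmid' := hmid m (by omega) (by omega)
  have hval : (σ m : ℕ) = (σ a : ℕ) := by omega
  have heqσ : σ m = σ a := Fin.ext hval
  have hma := σ.injective heqσ
  have : (m : ℕ) = A := congrArg Fin.val hma
  omega
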